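/- Uniqueness of the mean field game distribution: Let h: ℝ × [0,1] × {0,1} → ℝ be concave and C¹ in p with α*(p,θ,i) := ∂_p h(p,θ,i) ≥ 0, satisfying the monotonicity condition θ(h(q,θ̃,0)-h(q,θ,0)) + θ̃(h(p,θ,0)-h(p,θ̃,0)) + (1-θ)(h(-q,θ̃,1)-h(-q,θ,1)) + (1-θ̃)(h(-p,θ,1)-h(-p,θ̃,1)) ≤ -γ|θ-θ̃|² (γ > 0), and let ψ satisfy (x-y)(ψ(0,x)-ψ(0,y)) + (y-x)(ψ(1,x)-ψ(1,y)) ≥ 0. Suppose (θ, u) and (θ̃, ũ) are two C¹ solutions on [0,T] of the system: -du(i,t)/dt = h(u(1-i,t) - u(i,t), θ(t), i), dθ/dt = (1-θ)α*(u(0,t)-u(1,t), θ, 1) - θα*(u(1,t)-u(0,t), θ, 0), with θ(0) = θ̃(0) = θ̄ ∈ [0,1], θ, θ̃ taking values in [0,1], and u(i,T) = ψ(i,θ(T)), ũ(i,T) = ψ(i,θ̃(T)). Then θ(t) = θ̃(t) for all t ∈ [0,T]. -/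

import Mathlib

open Set

/-- Tangent line of a differentiable concave function lies above the graph. -/
private lemma concave_tangent_le {f : ℝ → ℝ} (hf : ConcaveOn ℝ univ f) {y f' : ℝ}
    (hd : HasDerivAt f f' y) (x : ℝ) : f x - f y ≤ f' * (x - y) := by
  rcases lt_trichotomy x y with hxy | rfl | hxy
  · have h1 := hf.le_slope_of_hasDerivAt (mem_univ x) (mem_univ y) hxy hd
    rw [slope_def_field] at h1
    have hpos : 0 < y - x := by linarith
    rw [le_div_iff₀ hpos] at h1
    nlinarith
  · simp
  · have h1 := hf.slope_le_of_hasDerivAt (mem_univ y) (mem_univ x) hxy hd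
    rw [slope_def_field] at h1
    have hpos : 0 < x - y := by linarith
    rw [div_le_iff₀ hpos] at h1
    nlinarith

/-- Uniqueness of the mean field game distribution: under the
Lasry–Lions monotonicity conditions on `h` and `ψ`, any two solutions of the
initial-terminal value problem for the two-state mean field game system have
the same distribution `θ`. -/
theorem mfg_uniqueness (T γ : ℝ) (hT : 0 < T) (hγ : 0 < γ)
    (h αs : ℝ → ℝ → Fin 2 → ℝ)
    (hderiv : ∀ (θ : ℝ) (i : Fin 2) (p : ℝ),
      HasDerivAt (fun q => h q θ i) (αs p θ i) p)
    (hαpos : ∀ (p θ : ℝ) (i : Fin 2), 0 ≤ αs p θ i)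
    (hconc : ∀ (θ : ℝ) (i : Fin 2), ConcaveOn ℝ univ fun p => h p θ i)
    (hmon : ∀ p q : ℝ, ∀ θ ∈ Icc (0:ℝ) 1, ∀ θ' ∈ Icc (0:ℝ) 1,
      θ * (h q θ' 0 - h q θ 0) + θ' * (h p θ 0 - h p θ' 0)
        + (1 - θ) * (h (-q) θ' 1 - h (-q) θ 1)
        + (1 - θ') * (h (-p) θ 1 - h (-p) θ' 1) ≤ -γ * |θ - θ'| ^ 2)
    (ψ : Fin 2 → ℝ → ℝ)
    (hψ : ∀ x ∈ Icc (0:ℝ) 1, ∀ y ∈ Icc (0:ℝ) 1,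
      0 ≤ (x - y) * (ψ 0 x - ψ 0 y) + (y - x) * (ψ 1 x - ψ 1 y))
    (θbar : ℝ) (hθbar : θbar ∈ Icc (0:ℝ) 1)
    (θ θ' : ℝ → ℝ) (u u' : Fin 2 → ℝ → ℝ)
    (hθrange : ∀ t ∈ Icc 0 T, θ t ∈ Icc (0:ℝ) 1)
    (hθ'range : ∀ t ∈ Icc 0 T, θ' t ∈ Icc (0:ℝ) 1)
    (hu : ∀ (i : Fin 2), ∀ t ∈ Icc 0 T,
      HasDerivAt (u i) (-h (u (1 - i) t - u i t) (θ t) i) t)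
    (hu' : ∀ (i : Fin 2), ∀ t ∈ Icc 0 T,
      HasDerivAt (u' i) (-h (u' (1 - i) t - u' i t) (θ' t) i) t)
    (hθode : ∀ t ∈ Icc 0 T, HasDerivAt θ
      ((1 - θ t) * αs (u 0 t - u 1 t) (θ t) 1
        - θ t * αs (u 1 t - u 0 t) (θ t) 0) t)
    (hθ'ode : ∀ t ∈ Icc 0 T, HasDerivAt θ'
      ((1 - θ' t) * αs (u' 0 t - u' 1 t) (θ' t) 1
        - θ' t * αs (u' 1 t - u' 0 t) (θ' t) 0) t)
    (hθ0 : θ 0 = θbar) (hθ'0 : θ' 0 = θbar)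
    (huT : ∀ i, u i T = ψ i (θ T)) (hu'T : ∀ i, u' i T = ψ i (θ' T)) :
    ∀ t ∈ Icc 0 T, θ t = θ' t := by
  have htan : ∀ (θ0 : ℝ) (i : Fin 2) (x y : ℝ),
      h x θ0 i - h y θ0 i ≤ αs y θ0 i * (x - y) :=
    fun θ0 i x y => concave_tangent_le (hconc θ0 i) (hderiv θ0 i y) x
  set E : ℝ → ℝ := fun s => (θ' s - θ s) * (u 1 s - u 0 s - (u' 1 s - u' 0 s)) with hEdef
  -- Key: at each point of [0,T], E has a derivative bounded by -γ(θ-θ')².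
  have key : ∀ t ∈ Icc 0 T, ∃ d, HasDerivAt E d t ∧ d ≤ -γ * (θ t - θ' t) ^ 2 := by
    intro t ht
    have hq1 : HasDerivAt (u 1) (-h (u 0 t - u 1 t) (θ t) 1) t := hu 1 t ht
    have hq0 : HasDerivAt (u 0) (-h (u 1 t - u 0 t) (θ t) 0) t := hu 0 t ht
    have hq1' : HasDerivAt (u' 1) (-h (u' 0 t - u' 1 t) (θ' t) 1) t := hu' 1 t ht
    have hq0' : HasDerivAt (u' 0) (-h (u' 1 t - u' 0 t) (θ' t) 0) t := hu' 0 t ht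
    have hθd := (hθ'ode t ht).sub (hθode t ht)
    have hdq := (hq1.sub hq0).sub (hq1'.sub hq0')
    refine ⟨_, hθd.mul hdq, ?_⟩
    have ha := hθrange t ht
    have hb := hθ'range t ht
    have hm := hmon (u 1 t - u 0 t) (u' 1 t - u' 0 t) (θ t) ha (θ' t) hb
    rw [sq_abs] at hm
    have hz1 := htan (θ t) 0 (u' 1 t - u' 0 t) (u 1 t - u 0 t)
    have hz2 := htan (θ' t) 0 (u 1 t - u 0 t) (u' 1 t - u' 0 t)
    have hz3 := htan (θ t) 1 (-(u' 1 t - u' 0 t)) (-(u 1 t - u 0 t))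
    have hz4 := htan (θ' t) 1 (-(u 1 t - u 0 t)) (-(u' 1 t - u' 0 t))
    have t1 := mul_le_mul_of_nonneg_left hz1 ha.1
    have t2 := mul_le_mul_of_nonneg_left hz2 hb.1
    have t3 := mul_le_mul_of_nonneg_left hz3 (by linarith [ha.2] : (0:ℝ) ≤ 1 - θ t)
    have t4 := mul_le_mul_of_nonneg_left hz4 (by linarith [hb.2] : (0:ℝ) ≤ 1 - θ' t)
    rw [show u 0 t - u 1 t = -(u 1 t - u 0 t) from by ring,
        show u' 0 t - u' 1 t = -(u' 1 t - u' 0 t) from by ring]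
    simp only [Pi.sub_apply]
    nlinarith [hm, t1, t2, t3, t4]
  have hTmem : T ∈ Icc (0:ℝ) T := ⟨hT.le, le_refl T⟩
  have h0mem : (0:ℝ) ∈ Icc (0:ℝ) T := ⟨le_refl 0, hT.le⟩
  -- E is antitone on [0,T]
  have hEcont : ContinuousOn E (Icc 0 T) := fun t ht =>
    ((key t ht).choose_spec.1.continuousAt).continuousWithinAt
  have hanti : AntitoneOn E (Icc 0 T) := by
    apply antitoneOn_of_deriv_nonpos (convex_Icc 0 T) hEcont
    · intro t ht
      rw [interior_Icc] at ht
      exact ((key t (Ioo_subset_Icc_self ht)).choose_spec.1.differentiableAt).differentiableWithinAt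
    · intro t ht
      rw [interior_Icc] at ht
      obtain ⟨d, hd, hdle⟩ := key t (Ioo_subset_Icc_self ht)
      rw [hd.deriv]
      nlinarith [sq_nonneg (θ t - θ' t)]
  have hE0 : E 0 = 0 := by
    show (θ' 0 - θ 0) * _ = 0
    rw [hθ0, hθ'0]; ring
  have hET : 0 ≤ E T := by
    have hp := hψ (θ T) (hθrange T hTmem) (θ' T) (hθ'range T hTmem)
    show 0 ≤ (θ' T - θ T) * (u 1 T - u 0 T - (u' 1 T - u' 0 T))
    rw [huT 0, huT 1, hu'T 0, hu'T 1]
    nlinarith [hp]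
  have hEzero : ∀ t ∈ Icc 0 T, E t = 0 := by
    intro t ht
    have h1 : E t ≤ E 0 := hanti h0mem ht ht.1
    have h2 : E T ≤ E t := hanti ht hTmem ht.2
    linarith [hE0 ▸ h1, hET, h2]
  -- Interior points: derivative of E is 0, hence θ = θ'.
  have hmid : ∀ t ∈ Ioo 0 T, θ t = θ' t := by
    intro t ht
    obtain ⟨d, hd, hdle⟩ := key t (Ioo_subset_Icc_self ht)
    have hEq : E =ᶠ[nhds t] fun _ => (0:ℝ) := by
      filter_upwards [Icc_mem_nhds ht.1 ht.2] with s hs using hEzero s hs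
    have h0 : HasDerivAt E 0 t := (hasDerivAt_const t (0:ℝ)).congr_of_eventuallyEq hEq
    have hd0 : d = 0 := hd.unique h0
    have hsq : (θ t - θ' t) ^ 2 ≤ 0 := by nlinarith
    have : θ t - θ' t = 0 := by nlinarith [sq_nonneg (θ t - θ' t)]
    linarith
  intro t ht
  rcases eq_or_lt_of_le ht.1 with rfl | h0t
  · rw [hθ0, hθ'0]
  rcases eq_or_lt_of_le ht.2 with rfl | htT
  · -- t = T : use continuity from the left
    have hcT : ContinuousAt (fun s => θ s - θ' s) t :=
      ((hθode t ht).continuousAt).sub ((hθ'ode t ht).continuousAt)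
    have hlim1 : Filter.Tendsto (fun s => θ s - θ' s) (nhdsWithin t (Iio t))
        (nhds (θ t - θ' t)) := hcT.continuousWithinAt
    have hEq2 : (fun s => θ s - θ' s) =ᶠ[nhdsWithin t (Iio t)] fun _ => (0:ℝ) := by
      filter_upwards [Ioo_mem_nhdsLT_of_mem ⟨h0t, le_refl t⟩] with s hs
      rw [hmid s hs, sub_self]
    have hlim2 : Filter.Tendsto (fun s => θ s - θ' s) (nhdsWithin t (Iio t))
        (nhds 0) := Filter.Tendsto.congr' hEq2.symm tendsto_const_nhds
    have hne : (nhdsWithin t (Iio t)).NeBot := by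
      exact nhdsLT_neBot t
    have := tendsto_nhds_unique hlim1 hlim2
    linarith
  · exact hmid t ⟨h0t, htT⟩
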